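/- The 3×3 matrix A = [[0,2,0],[0,0,0],[0,0,1]] has numerical radius ω(A) = 1, and the pair (A, 0) (with 0 the zero operator) is not annihilated by any Γ-distinguished polynomial: if q(A,0) = 0 for q ∈ ℂ[z₁,z₂], then q(1,0) = 0 since 1 ∈ σ(A), and (1,0) ∈ ∂Γ but (1,0) ∉ bΓ, contradicting Γ-distinguishedness of q. -/

import Mathlib

open Matrix

noncomputable section

def G2 : Set (ℂ × ℂ) :=
  {w | ∃ z₁ z₂ : ℂ, ‖z₁‖ < 1 ∧ ‖z₂‖ < 1 ∧ w = (z₁ + z₂, z₁ * z₂)}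

def GammaSet : Set (ℂ × ℂ) :=
  {w | ∃ z₁ z₂ : ℂ, ‖z₁‖ ≤ 1 ∧ ‖z₂‖ ≤ 1 ∧ w = (z₁ + z₂, z₁ * z₂)}

def bGamma : Set (ℂ × ℂ) :=
  {w | ∃ z₁ z₂ : ℂ, ‖z₁‖ = 1 ∧ ‖z₂‖ = 1 ∧ w = (z₁ + z₂, z₁ * z₂)}

def Zset (p : MvPolynomial (Fin 2) ℂ) : Set (ℂ × ℂ) :=
  {w | MvPolynomial.eval ![w.1, w.2] p = 0}

def GammaDistinguished (p : MvPolynomial (Fin 2) ℂ) : Prop :=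
  (Zset p ∩ G2).Nonempty ∧ Zset p ∩ (GammaSet \ G2) ⊆ bGamma

def opEval2 {A : Type*} [Ring A] [Algebra ℂ A] (p : MvPolynomial (Fin 2) ℂ) (S P : A) : A :=
  p.support.sum fun m => (MvPolynomial.coeff m p) • (S ^ (m 0) * P ^ (m 1))

def numRadius {n : ℕ} (A : Matrix (Fin n) (Fin n) ℂ) : ℝ :=
  sSup {r : ℝ | ∃ x : EuclideanSpace ℂ (Fin n), ‖x‖ = 1 ∧
    r = ‖(inner ℂ x (Matrix.toEuclideanLin A x) : ℂ)‖}

lemma my_sum_mulVec {ι : Type*} (f : Finset ι) (g : ι → Matrix (Fin 3) (Fin 3) ℂ) (v : Fin 3 → ℂ) :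
    (∑ m ∈ f, g m) *ᵥ v = ∑ m ∈ f, g m *ᵥ v := by
  induction f using Finset.cons_induction with
  | empty => simp
  | cons a s ha ih => simp [Finset.sum_cons, Matrix.add_mulVec, ih]

lemma gamma_mem : ((1 : ℂ), (0 : ℂ)) ∈ GammaSet \ G2 := by
  constructor
  · exact ⟨1, 0, by simp, by simp, by simp⟩
  · rintro ⟨z₁, z₂, h₁, h₂, heq⟩
    have he1 : z₁ + z₂ = 1 := (Prod.mk.injEq _ _ _ _ ▸ heq).1.symm
    have he2 : z₁ * z₂ = 0 := (Prod.mk.injEq _ _ _ _ ▸ heq).2.symm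
    rcases mul_eq_zero.mp he2 with h | h
    · rw [h, zero_add] at he1; rw [he1] at h₂; simp at h₂
    · rw [h, add_zero] at he1; rw [he1] at h₁; simp at h₁

lemma bGamma_not_mem : ((1 : ℂ), (0 : ℂ)) ∉ bGamma := by
  rintro ⟨z₁, z₂, h₁, h₂, heq⟩
  have he2 : z₁ * z₂ = 0 := (Prod.mk.injEq _ _ _ _ ▸ heq).2.symm
  rcases mul_eq_zero.mp he2 with h | h
  · rw [h] at h₁; simp at h₁
  · rw [h] at h₂; simp at h₂

lemma Amat_pow_mulVec (k : ℕ) :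
    (!![(0 : ℂ), 2, 0; 0, 0, 0; 0, 0, 1]) ^ k *ᵥ ![0,0,1] = ![0,0,1] := by
  induction k with
  | zero => simp
  | succ n ih =>
    rw [pow_succ, ← Matrix.mulVec_mulVec]
    have h0 : (!![(0 : ℂ), 2, 0; 0, 0, 0; 0, 0, 1]) *ᵥ ![0,0,1] = ![0,0,1] := by
      ext i; fin_cases i <;> simp [Matrix.mulVec, dotProduct, Fin.sum_univ_three]
    rw [h0, ih]

lemma eval_vanish (q : MvPolynomial (Fin 2) ℂ)
    (h : opEval2 q !![(0 : ℂ), 2, 0; 0, 0, 0; 0, 0, 1] 0 = 0) :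
    MvPolynomial.eval ![(1 : ℂ), 0] q = 0 := by
  set A : Matrix (Fin 3) (Fin 3) ℂ := !![(0 : ℂ), 2, 0; 0, 0, 0; 0, 0, 1] with hAdef
  have h2 := congrArg (fun M => (M *ᵥ ![(0:ℂ),0,1]) 2) h
  simp only [opEval2, my_sum_mulVec, zero_mulVec, Finset.sum_apply, Pi.zero_apply] at h2
  rw [MvPolynomial.eval_eq']
  calc ∑ m ∈ q.support, MvPolynomial.coeff m q * ∏ i, (![(1:ℂ), 0]) i ^ m i
      = ∑ m ∈ q.support, ((MvPolynomial.coeff m q • (A ^ m 0 * (0:Matrix (Fin 3) (Fin 3) ℂ) ^ m 1)) *ᵥ ![(0:ℂ),0,1]) 2 := by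
        refine Finset.sum_congr rfl fun m _ => ?_
        rcases Nat.eq_zero_or_pos (m 1) with h1 | h1
        · rw [smul_mulVec]
          simp [h1, Fin.prod_univ_two, Amat_pow_mulVec, hAdef, smul_eq_mul]
        · rw [zero_pow (by omega : m 1 ≠ 0), mul_zero, smul_zero, zero_mulVec]
          simp [Fin.prod_univ_two, zero_pow (by omega : m 1 ≠ 0)]
    _ = 0 := h2

lemma numRadius_eq : numRadius !![(0 : ℂ), 2, 0; 0, 0, 0; 0, 0, 1] = 1 := by
  set A : Matrix (Fin 3) (Fin 3) ℂ := !![(0 : ℂ), 2, 0; 0, 0, 0; 0, 0, 1] with hAdef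
  apply IsGreatest.csSup_eq
  constructor
  · refine ⟨EuclideanSpace.single 2 (1:ℂ), by simp, ?_⟩
    have h1 : (Matrix.toEuclideanLin A (EuclideanSpace.single 2 (1:ℂ)))
        = WithLp.toLp 2 (A.mulVec (EuclideanSpace.single 2 (1:ℂ))) := rfl
    rw [h1, EuclideanSpace.inner_single_left]
    simp [hAdef, Matrix.mulVec, dotProduct, Fin.sum_univ_three, EuclideanSpace.single_apply]
  · rintro r ⟨x, hx, rfl⟩
    have hT : (Matrix.toEuclideanLin A x) = WithLp.toLp 2 (A.mulVec x) := rfl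
    have hsum : ‖x 0‖ ^ 2 + ‖x 1‖ ^ 2 + ‖x 2‖ ^ 2 = 1 := by
      have h := EuclideanSpace.norm_eq x
      rw [hx] at h
      have := Real.sqrt_eq_one.mp h.symm
      simpa [Fin.sum_univ_three] using this
    have hinner : (inner ℂ x (Matrix.toEuclideanLin A x) : ℂ)
        = (starRingEnd ℂ) (x 0) * (2 * x 1) + (starRingEnd ℂ) (x 2) * (x 2) := by
      rw [hT]
      simp [PiLp.inner_apply, Fin.sum_univ_three, RCLike.inner_apply, hAdef,
        Matrix.mulVec, dotProduct]
      ring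
    rw [hinner]
    have h1 := norm_add_le ((starRingEnd ℂ) (x 0) * (2 * x 1)) ((starRingEnd ℂ) (x 2) * (x 2))
    have e1 : ‖(starRingEnd ℂ) (x 0) * (2 * x 1)‖ = 2 * (‖x 0‖ * ‖x 1‖) := by
      simp [_root_.map_mul]; ring
    have e2 : ‖(starRingEnd ℂ) (x 2) * (x 2)‖ = ‖x 2‖ ^ 2 := by
      simp [_root_.map_mul]; ring
    rw [e1, e2] at h1
    nlinarith [sq_nonneg (‖x 0‖ - ‖x 1‖), norm_nonneg (x 0), norm_nonneg (x 1)]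

/-- The matrix A = [[0,2,0],[0,0,0],[0,0,1]] has numerical radius 1, 1 ∈ σ(A),
(1,0) ∈ ∂Γ \ bΓ, every polynomial annihilating (A,0) vanishes at (1,0), and
(A,0) is not annihilated by any Γ-distinguished polynomial. -/
theorem stmt7 :
    numRadius !![(0 : ℂ), 2, 0; 0, 0, 0; 0, 0, 1] = 1 ∧
    (1 : ℂ) ∈ spectrum ℂ !![(0 : ℂ), 2, 0; 0, 0, 0; 0, 0, 1] ∧
    ((1 : ℂ), (0 : ℂ)) ∈ GammaSet \ G2 ∧
    ((1 : ℂ), (0 : ℂ)) ∉ bGamma ∧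
    (∀ q : MvPolynomial (Fin 2) ℂ,
      opEval2 q !![(0 : ℂ), 2, 0; 0, 0, 0; 0, 0, 1] 0 = 0 →
        MvPolynomial.eval ![(1 : ℂ), 0] q = 0 ∧ ¬ GammaDistinguished q) := by
  refine ⟨numRadius_eq, ?_, gamma_mem, bGamma_not_mem, fun q hq => ?_⟩
  · rw [spectrum.mem_iff]
    intro h
    rw [Matrix.isUnit_iff_isUnit_det] at h
    have hdet : ((algebraMap ℂ (Matrix (Fin 3) (Fin 3) ℂ)) 1
        - !![(0 : ℂ), 2, 0; 0, 0, 0; 0, 0, 1]).det = 0 := by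
      simp [Matrix.det_fin_three, Matrix.algebraMap_matrix_apply]
    rw [hdet] at h
    exact h.ne_zero rfl
  · have hev := eval_vanish q hq
    refine ⟨hev, fun hd => ?_⟩
    exact bGamma_not_mem (hd.2 ⟨hev, gamma_mem⟩)
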